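/- Let A ∈ ℝ^{m×n}, let S ⊆ {1,…,m} and i ∈ {1,…,m} \ S. Let b_i be the i-th row of B = A − π_S(A), and let C = A − π_{S∪{i}}(A). Then for every integer r ≥ 0, ∑_{T ⊆ {1,…,m}\(S∪{i}), |T|=r} det(A_{S∪{i}∪T} A_{S∪{i}∪T}^T) = ‖b_i‖² · det(A_S A_S^T) · ∑_{T ⊆ {1,…,m}, |T|=r} det(C_T C_T^T). -/

import Mathlib

open Matrix BigOperators

noncomputable def projSpan {m n : ℕ} (A : Matrix (Fin m) (Fin n) ℝ) (S : Finset (Fin m)) :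
    Matrix (Fin m) (Fin n) ℝ := fun i j =>
  (Submodule.orthogonalProjectionOnto
      (Submodule.span ℝ (Set.range (fun s : S => (WithLp.equiv 2 (Fin n → ℝ)).symm (A s))))
      ((WithLp.equiv 2 (Fin n → ℝ)).symm (A i)) : EuclideanSpace ℝ (Fin n)) j

def rowSub {m n : ℕ} (A : Matrix (Fin m) (Fin n) ℝ) (S : Finset (Fin m)) :
    Matrix {x // x ∈ S} (Fin n) ℝ := fun i j => A i.1 j

noncomputable def gramDet {m n : ℕ} (A : Matrix (Fin m) (Fin n) ℝ) (S : Finset (Fin m)) : ℝ :=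
  (rowSub A S * (rowSub A S)ᵀ).det

noncomputable def frobSq {m n : ℕ} (M : Matrix (Fin m) (Fin n) ℝ) : ℝ :=
  ∑ i, ∑ j, (M i j)^2

noncomputable def specNorm {m n : ℕ} (M : Matrix (Fin m) (Fin n) ℝ) : ℝ :=
  ‖LinearMap.toContinuousLinearMap (Matrix.toEuclideanLin M)‖

-- rows in S are fixed
lemma projSpan_self {m n : ℕ} (A : Matrix (Fin m) (Fin n) ℝ) (S : Finset (Fin m))
    {j : Fin m} (hj : j ∈ S) (k : Fin n) : projSpan A S j k = A j k := by
  have h : ((WithLp.equiv 2 (Fin n → ℝ)).symm (A j)) ∈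
      (Submodule.span ℝ (Set.range (fun s : S => (WithLp.equiv 2 (Fin n → ℝ)).symm (A s)))) :=
    Submodule.subset_span ⟨⟨j, hj⟩, rfl⟩
  rw [projSpan]
  rw [← Submodule.starProjection_apply, Submodule.starProjection_eq_self_iff.mpr h]
  rfl

-- orthogonality
lemma projSpan_orth {m n : ℕ} (A : Matrix (Fin m) (Fin n) ℝ) (S : Finset (Fin m))
    {u : Fin m} (hu : u ∈ S) (t : Fin m) :
    ∑ k, A u k * (A t k - projSpan A S t k) = 0 := by
  set K := (Submodule.span ℝ (Set.range (fun s : S => (WithLp.equiv 2 (Fin n → ℝ)).symm (A s))))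
  have h1 : ((WithLp.equiv 2 (Fin n → ℝ)).symm (A u)) ∈ K := Submodule.subset_span ⟨⟨u, hu⟩, rfl⟩
  have h2 := Submodule.sub_starProjection_mem_orthogonal (K := K)
    ((WithLp.equiv 2 (Fin n → ℝ)).symm (A t))
  have := (Submodule.mem_orthogonal K _).mp h2 _ h1
  rw [← this, PiLp.inner_apply]
  apply Finset.sum_congr rfl
  intro k _
  simp [RCLike.inner_apply, PiLp.toLp_apply, PiLp.sub_apply, projSpan, K, mul_comm]
  exact Or.inl rfl

-- coefficients
lemma projSpan_coeff {m n : ℕ} (A : Matrix (Fin m) (Fin n) ℝ) (S : Finset (Fin m)) (t : Fin m) :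
    ∃ c : S → ℝ, ∀ k, projSpan A S t k = ∑ u : S, c u * A u.1 k := by
  set v : S → EuclideanSpace ℝ (Fin n) := fun s => (WithLp.equiv 2 (Fin n → ℝ)).symm (A s)
  set K := Submodule.span ℝ (Set.range v)
  have hm : (Submodule.orthogonalProjectionOnto K ((WithLp.equiv 2 (Fin n → ℝ)).symm (A t)) : EuclideanSpace ℝ (Fin n)) ∈ K :=
    Submodule.coe_mem _
  rw [Submodule.mem_span_range_iff_exists_fun] at hm
  obtain ⟨c, hc⟩ := hm
  refine ⟨c, fun k => ?_⟩
  rw [projSpan, ← hc]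
  have := map_sum ((PiLp.projₗ 2 (fun _ : Fin n => ℝ) k : EuclideanSpace ℝ (Fin n) →ₗ[ℝ] ℝ)) (fun u : S => c u • v u) Finset.univ
  simp only [PiLp.projₗ_apply, WithLp.equiv_apply] at this
  rw [this]
  apply Finset.sum_congr rfl
  intro u _
  simp [v, WithLp.equiv_apply, PiLp.smul_apply, PiLp.toLp_apply, smul_eq_mul]

lemma gram_split {m n : ℕ} (A : Matrix (Fin m) (Fin n) ℝ) (U T : Finset (Fin m))
    (h : Disjoint U T) :
    gramDet A (U ∪ T) = gramDet A U * gramDet (A - projSpan A U) T := by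
  classical
  set D : Matrix (Fin m) (Fin n) ℝ := A - projSpan A U with hD
  -- coefficients
  have hcoef : ∀ t : {x // x ∈ T}, ∃ c : {x // x ∈ U} → ℝ,
      ∀ k, projSpan A U t.1 k = ∑ u : {x // x ∈ U}, c u * A u.1 k :=
    fun t => projSpan_coeff A U t.1
  choose c hc using hcoef
  set R : Matrix ({x // x ∈ U} ⊕ {x // x ∈ T}) (Fin n) ℝ :=
    Matrix.fromRows (rowSub A U) (rowSub A T) with hR
  set N : Matrix ({x // x ∈ U} ⊕ {x // x ∈ T}) (Fin n) ℝ :=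
    Matrix.fromRows (rowSub A U) (rowSub D T) with hN
  set P : Matrix ({x // x ∈ U} ⊕ {x // x ∈ T}) ({x // x ∈ U} ⊕ {x // x ∈ T}) ℝ :=
    Matrix.fromBlocks 1 0 (Matrix.of fun t u => c t u) 1 with hP
  have hPN : R = P * N := by
    ext a k
    cases a with
    | inl u =>
      simp [hR, hP, hN, Matrix.mul_apply, Fintype.sum_sum_type, Matrix.fromBlocks,
        Matrix.one_apply, rowSub, Finset.sum_ite_eq]
    | inr t =>
      simp only [hR, hP, hN, Matrix.mul_apply, Fintype.sum_sum_type, Matrix.fromBlocks,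
        Matrix.of_apply, Sum.elim_inl, Sum.elim_inr, Matrix.one_apply,
        Matrix.zero_apply, rowSub, Matrix.fromRows_apply_inl, Matrix.fromRows_apply_inr]
      simp only [Finset.sum_ite_eq, Finset.mem_univ, if_true, mul_ite, mul_one, mul_zero,
        Finset.sum_ite_eq', ite_mul, one_mul, zero_mul]
      have hDtk : D t.1 k = A t.1 k - projSpan A U t.1 k := by simp [hD]
      rw [hDtk, hc t k]
      ring
  have hdetP : P.det = 1 := by
    rw [hP, Matrix.det_fromBlocks_zero₁₂]
    simp
  have hNN : N * Nᵀ = Matrix.fromBlocks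
      (rowSub A U * (rowSub A U)ᵀ) 0 0 (rowSub D T * (rowSub D T)ᵀ) := by
    ext a b
    cases a with
    | inl u =>
      cases b with
      | inl u' => simp [hN, Matrix.mul_apply, rowSub]
      | inr t =>
        simp only [hN, Matrix.mul_apply, Matrix.transpose_apply, Matrix.fromRows,
          Matrix.of_apply, Sum.elim_inl, Sum.elim_inr, Matrix.fromBlocks, Matrix.zero_apply]
        have := projSpan_orth A U u.2 t.1
        calc ∑ k, rowSub A U u k * rowSub D T t k
            = ∑ k, A u.1 k * (A t.1 k - projSpan A U t.1 k) := by
              apply Finset.sum_congr rfl; intro k _; simp [rowSub, hD, Matrix.sub_apply]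
          _ = 0 := this
    | inr t =>
      cases b with
      | inl u =>
        simp only [hN, Matrix.mul_apply, Matrix.transpose_apply, Matrix.fromRows,
          Matrix.of_apply, Sum.elim_inl, Sum.elim_inr, Matrix.fromBlocks, Matrix.zero_apply]
        have := projSpan_orth A U u.2 t.1
        calc ∑ k, rowSub D T t k * rowSub A U u k
            = ∑ k, A u.1 k * (A t.1 k - projSpan A U t.1 k) := by
              apply Finset.sum_congr rfl; intro k _; simp [rowSub, hD, Matrix.sub_apply]; ring
          _ = 0 := this
      | inr t' => simp [hN, Matrix.mul_apply, rowSub]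
  -- equivalence
  have hUT : ∀ x : {x // x ∈ U ∪ T}, x.1 ∉ U → x.1 ∈ T := by
    intro x hx
    rcases Finset.mem_union.mp x.2 with h' | h'
    · exact absurd h' hx
    · exact h'
  set e : ({x // x ∈ U} ⊕ {x // x ∈ T}) ≃ {x // x ∈ U ∪ T} :=
    { toFun := Sum.elim (fun u => ⟨u.1, Finset.mem_union_left _ u.2⟩)
        (fun t => ⟨t.1, Finset.mem_union_right _ t.2⟩)
      invFun := fun x => if hx : x.1 ∈ U then Sum.inl ⟨x.1, hx⟩ else Sum.inr ⟨x.1, hUT x hx⟩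
      left_inv := by
        rintro (u | t)
        · simp [u.2]
        · have : t.1 ∉ U := fun hu => (Finset.disjoint_left.mp h hu) t.2
          simp [this]
      right_inv := by
        intro x
        by_cases hx : x.1 ∈ U <;> simp [hx] } with he
  have hsub : rowSub A (U ∪ T) = R.submatrix e.symm id := by
    ext x k
    simp only [Matrix.submatrix_apply, id_eq, hR, he]
    by_cases hx : x.1 ∈ U <;> simp [hx, rowSub, Equiv.coe_fn_symm_mk, Matrix.fromRows_apply_inl, Matrix.fromRows_apply_inr]
  have key : gramDet A (U ∪ T) = (R * Rᵀ).det := by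
    rw [gramDet, hsub]
    have : R.submatrix e.symm id * (R.submatrix e.symm id)ᵀ
        = (R * Rᵀ).submatrix e.symm e.symm := by
      ext x y
      simp [Matrix.mul_apply, Matrix.submatrix_apply, Matrix.transpose_apply]
    rw [this, Matrix.det_submatrix_equiv_self]
  rw [key, hPN]
  have : (P * N) * (P * N)ᵀ = P * (N * Nᵀ) * Pᵀ := by
    rw [Matrix.transpose_mul]
    simp only [Matrix.mul_assoc]
  rw [this, Matrix.det_mul, Matrix.det_mul, Matrix.det_transpose, hdetP, one_mul, mul_one,
    hNN, Matrix.det_fromBlocks_zero₁₂]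
  rfl


/-- ∑_{T ⊆ [m]\(S∪{i}), |T|=r} det(A_{S∪{i}∪T} A_{S∪{i}∪T}ᵀ)
  = ‖b_i‖² · det(A_S A_Sᵀ) · ∑_{|T|=r} det(C_T C_Tᵀ), where b_i is the i-th row of
B = A − π_S(A) and C = A − π_{S∪{i}}(A). -/
theorem sum_det_insert {m n : ℕ} (A : Matrix (Fin m) (Fin n) ℝ) (S : Finset (Fin m))
    (i : Fin m) (hi : i ∉ S) (B C : Matrix (Fin m) (Fin n) ℝ)
    (hB : B = A - projSpan A S) (hC : C = A - projSpan A (insert i S)) (r : ℕ) :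
    ∑ T ∈ Finset.powersetCard r (Finset.univ \ insert i S), gramDet A (insert i S ∪ T)
      = (∑ j, (B i j)^2) * gramDet A S *
          ∑ T ∈ Finset.powersetCard r (Finset.univ : Finset (Fin m)), gramDet C T := by
  classical
  -- rows of C in insert i S are zero
  have hCzero : ∀ j ∈ insert i S, ∀ k, C j k = 0 := by
    intro j hj k
    rw [hC]
    simp [Matrix.sub_apply, projSpan_self A (insert i S) hj k]
  -- gramDet C T = 0 when T meets insert i S
  have hCT0 : ∀ T : Finset (Fin m), ∀ j ∈ T, j ∈ insert i S → gramDet C T = 0 := by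
    intro T j hjT hjS
    apply Matrix.det_eq_zero_of_row_eq_zero (⟨j, hjT⟩ : {x // x ∈ T})
    intro b
    simp only [Matrix.mul_apply, Matrix.transpose_apply, rowSub]
    apply Finset.sum_eq_zero
    intro k _
    rw [hCzero j hjS k, zero_mul]
  -- restrict RHS sum
  have hres : ∑ T ∈ Finset.powersetCard r (Finset.univ : Finset (Fin m)), gramDet C T
      = ∑ T ∈ Finset.powersetCard r (Finset.univ \ insert i S), gramDet C T := by
    refine (Finset.sum_subset (Finset.powersetCard_mono (Finset.subset_univ _)) ?_).symm
    intro T hT hT'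
    rw [Finset.mem_powersetCard] at hT hT'
    have : ¬ T ⊆ Finset.univ \ insert i S := fun hsub => hT' ⟨hsub, hT.2⟩
    obtain ⟨j, hjT, hj⟩ := Finset.not_subset.mp this
    have hjS : j ∈ insert i S := by
      by_contra hns
      exact hj (Finset.mem_sdiff.mpr ⟨Finset.mem_univ j, hns⟩)
    exact hCT0 T j hjT hjS
  -- gramDet B {i} = ∑ (B i j)^2
  haveI : Unique {x // x ∈ ({i} : Finset (Fin m))} :=
    ⟨⟨⟨i, Finset.mem_singleton_self i⟩⟩, by
      rintro ⟨x, hx⟩; exact Subtype.ext (Finset.mem_singleton.mp hx)⟩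
  have hBi : gramDet B {i} = ∑ j, (B i j)^2 := by
    rw [gramDet, Matrix.det_unique]
    have hdef : ((default : {x // x ∈ ({i} : Finset (Fin m))}) : Fin m) = i :=
      Finset.mem_singleton.mp (default : {x // x ∈ ({i} : Finset (Fin m))}).2
    simp [Matrix.mul_apply, rowSub, sq, hdef]
  -- gramDet A (insert i S)
  have hins : gramDet A (insert i S) = (∑ j, (B i j)^2) * gramDet A S := by
    have h1 : insert i S = S ∪ {i} := by
      rw [Finset.union_comm, ← Finset.insert_eq]
    have h2 : Disjoint S ({i} : Finset (Fin m)) := by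
      simp [Finset.disjoint_singleton_right, hi]
    rw [h1, gram_split A S {i} h2, ← hB, hBi]
    ring
  rw [hres, Finset.mul_sum]
  apply Finset.sum_congr rfl
  intro T hT
  rw [Finset.mem_powersetCard] at hT
  have hdisj : Disjoint (insert i S) T := by
    rw [Finset.disjoint_left]
    intro a ha haT
    have := hT.1 haT
    rw [Finset.mem_sdiff] at this
    exact this.2 ha
  rw [gram_split A (insert i S) T hdisj, ← hC, hins]
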